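/- Let Γ ⊆ [0, ∞) satisfy the descending chain condition, and let Γ_+ := ({finite sums of elements of Γ} ∪ {0}) ∩ [0,1]. Then the set D(Γ) := {(m − 1 + γ)/m : m a positive integer, γ ∈ Γ_+} satisfies the descending chain condition. -/

import Mathlib

/-- For Γ ⊆ [0,∞) a DCC set, with Γ₊ = ({finite sums of elements of Γ} ∪ {0}) ∩ [0,1],
the set D(Γ) = {(m - 1 + γ)/m : m ∈ ℕ⁺, γ ∈ Γ₊} satisfies the DCC. -/
theorem dcc_D_of_dcc (Γ : Set ℝ) (hΓ0 : Γ ⊆ Set.Ici 0)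
    (hΓ : ¬ ∃ f : ℕ → ℝ, (∀ n, f n ∈ Γ) ∧ StrictAnti f) :
    ¬ ∃ f : ℕ → ℝ,
      (∀ n, f n ∈ {x : ℝ | ∃ m : ℕ, 0 < m ∧ ∃ γ ∈
        (({y : ℝ | ∃ s : Multiset ℝ, s ≠ 0 ∧ (∀ z ∈ s, z ∈ Γ) ∧ s.sum = y} ∪ {0})
          ∩ Set.Icc 0 1),
        x = ((m : ℝ) - 1 + γ) / m}) ∧
      StrictAnti f := by
  rintro ⟨f, hf, hanti⟩
  -- Γ is well-founded
  have hΓWF : Γ.IsWF := by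
    rw [Set.isWF_iff_no_descending_seq]
    intro g hg hgs
    exact hΓ ⟨g, fun n => hgs n, hg⟩
  -- Gp is contained in the additive submonoid closure of Γ, hence is PWO
  set Gp : Set ℝ :=
    (({y : ℝ | ∃ s : Multiset ℝ, s ≠ 0 ∧ (∀ z ∈ s, z ∈ Γ) ∧ s.sum = y} ∪ {0})
      ∩ Set.Icc 0 1) with hGpdef
  have hC : ((AddSubmonoid.closure Γ : AddSubmonoid ℝ) : Set ℝ).IsPWO :=
    Set.IsPWO.addSubmonoid_closure (fun x hx => hΓ0 hx) hΓWF.isPWO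
  have hsub : Gp ⊆ ((AddSubmonoid.closure Γ : AddSubmonoid ℝ) : Set ℝ) := by
    rintro x ⟨hx, -⟩
    rcases hx with ⟨s, -, hsΓ, rfl⟩ | hx0
    · exact AddSubmonoid.multiset_sum_mem _ s
        (fun z hz => AddSubmonoid.subset_closure (hsΓ z hz))
    · simp only [Set.mem_singleton_iff] at hx0
      subst hx0
      exact zero_mem _
  have hGpPWO : Gp.IsPWO := hC.mono hsub
  -- decompose the sequence
  choose m hm γ hγ hfx using hf
  have hγIcc : ∀ n, γ n ∈ Set.Icc (0:ℝ) 1 := fun n => (hγ n).2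
  have hmpos : ∀ n, (0:ℝ) < m n := fun n => by exact_mod_cast hm n
  -- f 0 ≤ 1
  have hf0 : f 0 ≤ 1 := by
    rw [hfx 0, div_le_one (hmpos 0)]
    linarith [(hγIcc 0).2]
  have hc1 : f 1 < 1 := lt_of_lt_of_le (hanti (by norm_num : (0:ℕ) < 1)) hf0
  have hpos : (0:ℝ) < 1 - f 1 := by linarith
  -- for n ≥ 1, m n is bounded
  set M : ℕ := ⌈1 / (1 - f 1)⌉₊ with hM
  have hmM : ∀ n, 1 ≤ n → m n ∈ Finset.Icc 1 M := by
    intro n hn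
    have hfn : f n ≤ f 1 := hanti.antitone hn
    have h1 : ((m n : ℝ) - 1) / m n ≤ f 1 := by
      refine le_trans ?_ hfn
      rw [hfx n]
      gcongr
      linarith [(hγIcc n).1]
    have h2 : (m n : ℝ) * (1 - f 1) ≤ 1 := by
      have := (div_le_iff₀ (hmpos n)).mp h1
      nlinarith
    have h3 : (m n : ℝ) ≤ 1 / (1 - f 1) := by
      rw [le_div_iff₀ hpos]; exact h2
    have h4 : (m n : ℝ) ≤ (M : ℝ) := h3.trans (Nat.le_ceil _)
    exact Finset.mem_Icc.mpr ⟨hm n, by exact_mod_cast h4⟩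
  -- the bounded set is well-founded
  set S : Set ℝ := ⋃ k ∈ Finset.Icc 1 M, (fun x => ((k:ℝ) - 1 + x) / k) '' Gp with hS
  have hSWF : S.IsWF := by
    rw [← Set.isPWO_iff_isWF, hS, Finset.isPWO_bUnion]
    intro k hk
    apply hGpPWO.image_of_monotone
    intro a b hab
    have hk0 : (0:ℝ) < k := by
      have := (Finset.mem_Icc.mp hk).1
      exact_mod_cast Nat.lt_of_lt_of_le Nat.zero_lt_one this
    exact (div_le_div_iff_of_pos_right hk0).mpr (by linarith)
  -- derive a contradiction
  rw [Set.isWF_iff_no_descending_seq] at hSWF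
  refine hSWF (fun n => f (n + 1)) (fun a b hab => hanti (by omega)) ?_
  intro n
  simp only [hS, Set.mem_iUnion]
  exact ⟨m (n+1), hmM (n+1) (by omega), γ (n+1), hγ (n+1), (hfx (n+1)).symm⟩
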